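/- Let V be a vector space over a field of characteristic p > 0 and let D, L be linear endomorphisms of V satisfying [D, L] = Id. Then Σ_{i=0}^{p-1} D^{p-1-i} ∘ L^{p-1} ∘ D^{i} = −Id. -/

import Mathlib

open Finset

lemma choose_zmod {p : ℕ} (hp : p.Prime) : ∀ m, m ≤ p - 1 → (((p-1).choose m : ℤ) : ZMod p) = (-1)^m := by
  intro m
  induction m with
  | zero => simp
  | succ m ih =>
    intro hm
    have hpos := hp.pos
    have hpascal : p.choose (m+1) = (p-1).choose m + (p-1).choose (m+1) := by
      have : p = (p-1) + 1 := by omega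
      nth_rewrite 1 [this]
      rw [Nat.choose_succ_succ]
    have h0 : ((p.choose (m+1) : ℤ) : ZMod p) = 0 := by
      have := hp.dvd_choose_self (Nat.succ_ne_zero m) (by omega)
      rw [Int.cast_natCast, ZMod.natCast_eq_zero_iff]
      exact this
    have := ih (by omega)
    have : ((( (p-1).choose (m+1) : ℕ) : ℤ) : ZMod p) = -(-1)^m := by
      have hcast : ((p.choose (m+1) : ℤ) : ZMod p)
          = (((p-1).choose m : ℤ) : ZMod p) + (((p-1).choose (m+1) : ℤ) : ZMod p) := by
        rw [hpascal]; push_cast; ring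
      rw [h0, this] at hcast
      linear_combination -hcast
    rw [this]; ring

lemma comm_pow {R : Type*} [Ring R] (D L : R) (h : D * L - L * D = 1) :
    ∀ m : ℕ, D * L ^ m - L ^ m * D = m • L ^ (m - 1) := by
  intro m
  induction m with
  | zero => simp
  | succ m ih =>
    have key : D * L ^ (m+1) - L ^ (m+1) * D
        = (D * L ^ m - L ^ m * D) * L + L ^ m * (D * L - L * D) := by
      rw [pow_succ]; noncomm_ring
    rw [key, ih, h, mul_one, smul_mul_assoc]
    cases m with
    | zero => simp
    | succ n =>
      rw [Nat.succ_sub_one, ← pow_succ, Nat.succ_sub_one, add_nsmul, add_nsmul, one_nsmul, add_nsmul, one_nsmul]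

theorem stmt1 {p : ℕ} (hp : p.Prime) {k : Type} [Field k] [CharP k p]
    {V : Type} [AddCommGroup V] [Module k V]
    (D L : Module.End k V) (h : D * L - L * D = 1) :
    ∑ i ∈ Finset.range p, D ^ (p - 1 - i) * L ^ (p - 1) * D ^ i = -1 := by
  haveI : Fact p.Prime := ⟨hp⟩
  have hpos := hp.pos
  set x : Module.End k (Module.End k V) := LinearMap.mulLeft k D with hx
  set y : Module.End k (Module.End k V) := LinearMap.mulRight k D with hy
  have hsplit : x - y = LinearMap.mulLeft k D + LinearMap.mulRight k (-D) := by
    ext Z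
    simp [hx, hy, LinearMap.sub_apply, LinearMap.mulRight_apply, LinearMap.mulLeft_apply,
      mul_neg, sub_eq_add_neg]
  have hxy : Commute (LinearMap.mulLeft k D) (LinearMap.mulRight k (-D)) :=
    LinearMap.commute_mulLeft_right D (-D)
  -- expansion
  have hexp : ∀ (n : ℕ) (X : Module.End k V), ((x - y)^n) X
      = ∑ m ∈ range (n+1), (n.choose m) • (D^m * X * (-D)^(n-m)) := by
    intro n X
    rw [hsplit, hxy.add_pow, LinearMap.sum_apply]
    refine Finset.sum_congr rfl fun m hm => ?_
    rw [Module.End.mul_apply, Module.End.mul_apply, Module.End.natCast_apply,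
      LinearMap.pow_mulLeft, LinearMap.pow_mulRight, map_nsmul, map_nsmul,
      LinearMap.mulRight_apply, LinearMap.mulLeft_apply, mul_assoc]
  -- iterated derivation
  have hsub : ∀ (X : Module.End k V), (x - y) X = D * X - X * D := by
    intro X
    simp [hx, hy, LinearMap.sub_apply]
  have hiter : ∀ n : ℕ, n ≤ p - 1 →
      ((x - y)^n) (L^(p-1)) = ((p-1).descFactorial n) • L^(p-1-n) := by
    intro n
    induction n with
    | zero => intro _; simp
    | succ n ih =>
      intro hn
      rw [pow_succ', Module.End.mul_apply, ih (by omega), map_nsmul, hsub,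
        comm_pow D L h (p-1-n), Nat.descFactorial_succ]
      rw [smul_smul, show p - 1 - n - 1 = p - 1 - (n+1) by omega, mul_comm]
  -- value at n = p-1
  have hval : ((x - y)^(p-1)) (L^(p-1)) = -1 := by
    rw [hiter (p-1) le_rfl, Nat.descFactorial_self, Nat.sub_self, pow_zero]
    have hk : ((Nat.factorial (p-1) : ℕ) : k) = -1 := by
      have hw := ZMod.wilsons_lemma (p := p)
      have h2 : ((ZMod.castHom (dvd_refl p) k) ((Nat.factorial (p-1) : ℕ) : ZMod p))
          = ((Nat.factorial (p-1) : ℕ) : k) := map_natCast _ _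
      rw [hw, map_neg, map_one] at h2
      exact h2.symm
    calc (Nat.factorial (p-1)) • (1 : Module.End k V)
        = ((Nat.factorial (p-1) : ℕ) : k) • (1 : Module.End k V) :=
          (Nat.cast_smul_eq_nsmul k _ _).symm
      _ = -1 := by rw [hk]; simp
  -- neg one pow
  have hneg : ((-1 : k)^(p-1)) = 1 := by
    rcases hp.eq_two_or_odd' with h2 | hodd
    · subst h2
      have h2k : (2 : k) = 0 := by exact_mod_cast CharP.cast_eq_zero k 2
      have hne : (-1 : k) = 1 := by linear_combination -h2k
      rw [show (2:ℕ) - 1 = 1 from rfl, pow_one, hne]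
    · have : Even (p - 1) := Nat.Odd.sub_odd hodd odd_one
      exact this.neg_one_pow
  -- coefficients
  have hcoef : ∀ m, m ≤ p - 1 →
      ((p-1).choose m) • (D^m * (L^(p-1)) * (-D)^(p-1-m)) = D^m * (L^(p-1)) * D^(p-1-m) := by
    intro m hm
    have hck : (((p-1).choose m : ℕ) : k) = (-1 : k)^m := by
      have hz := choose_zmod hp m hm
      have h2 : ((ZMod.castHom (dvd_refl p) k) ((((p-1).choose m : ℤ)) : ZMod p))
          = ((((p-1).choose m : ℤ)) : k) := map_intCast _ _
      rw [hz] at h2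
      push_cast at h2
      rw [← h2, map_pow, map_neg, map_one]
    have hD : (-D)^(p-1-m) = ((-1 : k)^(p-1-m)) • D^(p-1-m) := by
      rw [show -D = (-1 : k) • D from by rw [neg_one_smul], smul_pow]
    rw [hD, mul_smul_comm, ← Nat.cast_smul_eq_nsmul k, smul_smul, hck, ← pow_add,
      show m + (p-1-m) = p - 1 by omega, hneg, one_smul]
  -- put it together
  have hsum : ∑ m ∈ range p, D^m * (L^(p-1)) * D^(p-1-m) = -1 := by
    have he := hexp (p-1) (L^(p-1))
    rw [hval, show p - 1 + 1 = p by omega] at he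
    calc ∑ m ∈ range p, D^m * (L^(p-1)) * D^(p-1-m)
        = ∑ m ∈ range p, ((p-1).choose m) • (D^m * (L^(p-1)) * (-D)^(p-1-m)) :=
          Finset.sum_congr rfl fun m hm => (hcoef m (by
            have := Finset.mem_range.mp hm; omega)).symm
      _ = -1 := he.symm
  rw [← Finset.sum_range_reflect]
  calc ∑ j ∈ range p, D ^ (p - 1 - (p - 1 - j)) * L ^ (p - 1) * D ^ (p - 1 - j)
      = ∑ j ∈ range p, D ^ j * L ^ (p - 1) * D ^ (p - 1 - j) :=
        Finset.sum_congr rfl fun j hj => by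
          have := Finset.mem_range.mp hj
          rw [show p - 1 - (p - 1 - j) = j by omega]
    _ = -1 := hsum
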